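/- For budget B = 3, the gain of overlaps is at most 7/3, and for budget B = 4 it is at most 15/4. More generally, partitioning the individuals pooled by an optimal overlapping regime with B tests according to the nonempty subset of tests containing them yields at most 2^B − 1 classes, and using the B classes of highest value q_S · Σ_{i∈S} u_i as disjoint tests gives a non-overlapping regime whose welfare is at least B/(2^B − 1) times the optimal overlapping welfare. -/

import Mathlib

open Finset

/-- Probability of a health realization `ω` (true = healthy) under independent
healthy-probabilities `q`. -/
noncomputable def healthProb {n : ℕ} (q : Fin n → ℝ) (ω : Fin n → Bool) : ℝ :=
  ∏ i, if ω i then q i else 1 - q i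

/-- Probability that individual `i` lies in at least one negative test of the regime `T`. -/
noncomputable def inNegProb {n B : ℕ} (q : Fin n → ℝ) (T : Fin B → Finset (Fin n))
    (i : Fin n) : ℝ :=
  ∑ ω : Fin n → Bool,
    if ∃ j, i ∈ T j ∧ ∀ k ∈ T j, ω k = true then healthProb q ω else 0

/-- Expected welfare of a (possibly overlapping) testing regime `T`. -/
noncomputable def welfare {n B : ℕ} (q u : Fin n → ℝ) (T : Fin B → Finset (Fin n)) : ℝ :=
  ∑ i, u i * inNegProb q T i

/-- Stand-alone expected welfare of a single pooled test `t`. -/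
noncomputable def testWelfare {n : ℕ} (q u : Fin n → ℝ) (t : Finset (Fin n)) : ℝ :=
  (∏ i ∈ t, q i) * ∑ i ∈ t, u i

/-- Welfare of a non-overlapping testing regime, as a sum of stand-alone test welfares. -/
noncomputable def noWelfare {n B : ℕ} (q u : Fin n → ℝ) (T : Fin B → Finset (Fin n)) : ℝ :=
  ∑ j, testWelfare q u (T j)

/-- Probability that test `T j` is pivotal for individual `i`: `i ∈ T j`, test `T j` is
negative, and every earlier test containing `i` is positive. -/
noncomputable def pivotalProb {n B : ℕ} (q : Fin n → ℝ) (T : Fin B → Finset (Fin n))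
    (i : Fin n) (j : Fin B) : ℝ :=
  ∑ ω : Fin n → Bool,
    if i ∈ T j ∧ (∀ k ∈ T j, ω k = true) ∧
        (∀ j' : Fin B, j' < j → i ∈ T j' → ∃ k ∈ T j', ω k = false)
      then healthProb q ω else 0


lemma healthProb_nonneg {n : ℕ} {q : Fin n → ℝ} (hq : ∀ i, 0 ≤ q i ∧ q i ≤ 1)
    (ω : Fin n → Bool) : 0 ≤ healthProb q ω := by
  refine Finset.prod_nonneg fun i _ => ?_
  by_cases h : ω i <;> simp [h]
  · exact (hq i).1
  · linarith [(hq i).2]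

/-- key computation: the probability that everyone in `S` is healthy is `∏ q`. -/
lemma sum_all_healthy {n : ℕ} (q : Fin n → ℝ) (S : Finset (Fin n)) :
    (∑ ω : Fin n → Bool, if ∀ k ∈ S, ω k = true then healthProb q ω else 0)
      = ∏ k ∈ S, q k := by
  have h1 : ∀ ω : Fin n → Bool,
      (if ∀ k ∈ S, ω k = true then healthProb q ω else 0)
        = ∏ i, (if i ∈ S then (if ω i then q i else 0)
            else (if ω i then q i else 1 - q i)) := by
    intro ω
    by_cases h : ∀ k ∈ S, ω k = true
    · rw [if_pos h]
      unfold healthProb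
      apply Finset.prod_congr rfl
      intro i _
      by_cases hi : i ∈ S
      · rw [if_pos hi, h i hi, if_pos rfl, if_pos rfl]
      · rw [if_neg hi]
    · rw [if_neg h]
      push_neg at h
      obtain ⟨k, hkS, hk⟩ := h
      rw [eq_comm]
      refine Finset.prod_eq_zero (Finset.mem_univ k) ?_
      simp [hkS, hk]
  simp only [h1]
  have key := Finset.prod_univ_sum (fun _ : Fin n => (univ : Finset Bool))
    (fun i b => if i ∈ S then (if b then q i else 0) else (if b then q i else 1 - q i))
  rw [Fintype.piFinset_univ] at key
  rw [← key]
  have h2 : ∀ i : Fin n,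
      (∑ b : Bool, (if i ∈ S then (if b then q i else 0)
          else (if b then q i else 1 - q i))) = if i ∈ S then q i else 1 := by
    intro i
    by_cases hi : i ∈ S <;> simp [hi, Fintype.sum_bool] <;> ring
  simp only [h2]
  rw [Finset.prod_ite_mem]
  simp

/-- top-k averaging lemma -/
lemma topk {ι : Type*} [DecidableEq ι] (v : ι → ℝ) :
    ∀ (k : ℕ) (P : Finset ι), (∀ x ∈ P, 0 ≤ v x) → k ≤ P.card →
      ∃ Q ⊆ P, Q.card = k ∧ (∀ a ∈ Q, ∀ b ∈ P \ Q, v b ≤ v a) ∧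
        (k : ℝ) * ∑ x ∈ P, v x ≤ (P.card : ℝ) * ∑ x ∈ Q, v x := by
  intro k
  induction k with
  | zero =>
    intro P hv _
    refine ⟨∅, Finset.empty_subset P, rfl, by simp, ?_⟩
    simp
  | succ k ih =>
    intro P hv hk
    obtain ⟨Q, hQP, hQcard, htop, _⟩ := ih P hv (Nat.le_of_succ_le hk)
    have hcard : (P \ Q).card = P.card - k := by
      rw [Finset.card_sdiff_of_subset hQP, hQcard]
    have hne : (P \ Q).Nonempty := by
      rw [← Finset.card_pos, hcard]
      omega
    obtain ⟨b, hbPQ, hbmax⟩ := Finset.exists_max_image (P \ Q) v hne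
    have hbP : b ∈ P := (Finset.mem_sdiff.1 hbPQ).1
    have hbQ : b ∉ Q := (Finset.mem_sdiff.1 hbPQ).2
    refine ⟨insert b Q, Finset.insert_subset hbP hQP, by rw [Finset.card_insert_of_notMem hbQ, hQcard], ?_, ?_⟩
    · intro a ha c hc
      have hcQ' : c ∈ P \ Q := by
        rw [Finset.mem_sdiff] at hc ⊢
        exact ⟨hc.1, fun h => hc.2 (Finset.mem_insert_of_mem h)⟩
      rcases Finset.mem_insert.1 ha with h | h
      · subst h; exact hbmax c hcQ'
      · exact htop a h c hcQ'
    · -- the numeric inequality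
      rw [Finset.sum_insert hbQ]
      have hvb : 0 ≤ v b := hv b hbP
      have hF2 : ∑ x ∈ P \ Q, v x ≤ ((P.card : ℝ) - k) * v b := by
        have := Finset.sum_le_card_nsmul (P \ Q) v (v b) (fun x hx => hbmax x hx)
        rw [hcard] at this
        have hcast : ((P.card - k : ℕ) : ℝ) = (P.card : ℝ) - k := by
          have : k ≤ P.card := Nat.le_of_succ_le hk
          push_cast [Nat.cast_sub this]; ring
        calc ∑ x ∈ P \ Q, v x ≤ (P.card - k : ℕ) • v b := this
          _ = ((P.card - k : ℕ) : ℝ) * v b := by rw [nsmul_eq_mul]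
          _ = ((P.card : ℝ) - k) * v b := by rw [hcast]
      have hF3 : (k : ℝ) * v b ≤ ∑ x ∈ Q, v x := by
        have := Finset.card_nsmul_le_sum Q v (v b) (fun a ha => htop a ha b hbPQ)
        rw [hQcard, nsmul_eq_mul] at this
        exact this
      have hF4 : ∑ x ∈ P \ Q, v x + ∑ x ∈ Q, v x = ∑ x ∈ P, v x :=
        Finset.sum_sdiff hQP
      have hm : (k : ℝ) + 1 ≤ (P.card : ℝ) := by exact_mod_cast hk
      have hA : (0:ℝ) ≤ ((P.card : ℝ) - k - 1) * (∑ x ∈ Q, v x - (k : ℝ) * v b) :=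
        mul_nonneg (by linarith) (by linarith)
      have hC : (0:ℝ) ≤ ((k : ℝ) + 1) * (((P.card : ℝ) - k) * v b - ∑ x ∈ P \ Q, v x) :=
        mul_nonneg (by positivity) (by linarith)
      push_cast
      nlinarith [hA, hC]

lemma inNegProb_nonneg {n B : ℕ} {q : Fin n → ℝ} (hq : ∀ i, 0 ≤ q i ∧ q i ≤ 1)
    (T : Fin B → Finset (Fin n)) (i : Fin n) : 0 ≤ inNegProb q T i := by
  refine Finset.sum_nonneg fun ω _ => ?_
  split
  · exact healthProb_nonneg hq ω
  · exact le_refl 0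

/-- monotone comparison of indicator sums -/
lemma indic_le_indic {n : ℕ} {q : Fin n → ℝ} (hq : ∀ i, 0 ≤ q i ∧ q i ≤ 1)
    (p₁ p₂ : (Fin n → Bool) → Prop) [DecidablePred p₁] [DecidablePred p₂]
    (h : ∀ ω, p₁ ω → p₂ ω) :
    (∑ ω : Fin n → Bool, if p₁ ω then healthProb q ω else 0)
      ≤ ∑ ω : Fin n → Bool, if p₂ ω then healthProb q ω else 0 := by
  refine Finset.sum_le_sum fun ω _ => ?_
  by_cases h1 : p₁ ω
  · rw [if_pos h1, if_pos (h ω h1)]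
  · rw [if_neg h1]
    split
    · exact healthProb_nonneg hq ω
    · exact le_refl 0

lemma general {n G B : ℕ} (q u : Fin n → ℝ) (hq : ∀ i, 0 ≤ q i ∧ q i ≤ 1)
    (hu : ∀ i, 0 ≤ u i) (T : Fin B → Finset (Fin n)) (hT : ∀ j, (T j).card ≤ G) :
    ∃ T' : Fin B → Finset (Fin n),
      (∀ j k, j ≠ k → Disjoint (T' j) (T' k)) ∧ (∀ j, (T' j).card ≤ G) ∧
        (B : ℝ) * welfare q u T ≤ ((2 : ℝ) ^ B - 1) * welfare q u T' := by
  classical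
  set pat : Fin n → Finset (Fin B) := fun i => univ.filter (fun j => i ∈ T j) with hpat
  set cls : Finset (Fin B) → Finset (Fin n) :=
    fun p => univ.filter (fun i => pat i = p) with hcls
  set v : Finset (Fin B) → ℝ := fun p => testWelfare q u (cls p) with hv
  set P : Finset (Finset (Fin B)) := univ.erase ∅ with hP
  -- membership facts
  have mem_cls : ∀ p i, i ∈ cls p ↔ pat i = p := by
    intro p i; simp [hcls]
  have mem_pat : ∀ i j, j ∈ pat i ↔ i ∈ T j := by
    intro i j; simp [hpat]
  -- upper bound on inNegProb by class product
  have upper : ∀ i : Fin n, inNegProb q T i ≤ ∏ k ∈ cls (pat i), q k := by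
    intro i
    rw [← sum_all_healthy q (cls (pat i))]
    refine indic_le_indic hq _ _ ?_
    rintro ω ⟨j, hij, hall⟩ k hk
    rw [mem_cls] at hk
    exact hall k (by rw [← mem_pat i j] at hij; rw [← mem_pat, hk]; exact hij)
  -- welfare bounded by sum of class values over nonempty patterns
  have step1 : welfare q u T ≤ ∑ p ∈ P, v p := by
    have grp : welfare q u T
        = ∑ p : Finset (Fin B), ∑ i ∈ univ.filter (fun i => pat i = p),
            u i * inNegProb q T i := by
      rw [welfare, ← Finset.sum_fiberwise univ pat (fun i => u i * inNegProb q T i)]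
    have empty0 : ∑ i ∈ univ.filter (fun i => pat i = ∅), u i * inNegProb q T i = 0 := by
      refine Finset.sum_eq_zero fun i hi => ?_
      have hpe : pat i = ∅ := (Finset.mem_filter.1 hi).2
      have : inNegProb q T i = 0 := by
        rw [inNegProb]
        refine Finset.sum_eq_zero fun ω _ => ?_
        rw [if_neg]
        rintro ⟨j, hij, -⟩
        have : j ∈ pat i := (mem_pat i j).2 hij
        simp [hpe] at this
      rw [this, mul_zero]
    have split : ∑ p : Finset (Fin B), ∑ i ∈ univ.filter (fun i => pat i = p),
          u i * inNegProb q T i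
        = ∑ p ∈ P, ∑ i ∈ univ.filter (fun i => pat i = p), u i * inNegProb q T i := by
      rw [hP, ← Finset.add_sum_erase _ _ (Finset.mem_univ ∅), empty0, zero_add]
    rw [grp, split]
    refine Finset.sum_le_sum fun p hp => ?_
    have : ∀ i ∈ univ.filter (fun i => pat i = p),
        u i * inNegProb q T i ≤ u i * ∏ k ∈ cls p, q k := by
      intro i hi
      have hpi : pat i = p := (Finset.mem_filter.1 hi).2
      have := upper i
      rw [hpi] at this
      exact mul_le_mul_of_nonneg_left this (hu i)
    calc ∑ i ∈ univ.filter (fun i => pat i = p), u i * inNegProb q T i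
        ≤ ∑ i ∈ univ.filter (fun i => pat i = p), u i * ∏ k ∈ cls p, q k :=
          Finset.sum_le_sum this
      _ = v p := by
          simp only [hv, testWelfare, hcls]
          rw [← Finset.sum_mul, mul_comm]
  -- values are nonnegative
  have hvnn : ∀ p ∈ P, 0 ≤ v p := by
    intro p _
    exact mul_nonneg (Finset.prod_nonneg fun k _ => (hq k).1)
      (Finset.sum_nonneg fun i _ => hu i)
  -- cardinality of P
  have hPcard : P.card = 2 ^ B - 1 := by
    rw [hP, Finset.card_erase_of_mem (Finset.mem_univ ∅), Finset.card_univ,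
      Fintype.card_finset, Fintype.card_fin]
  have hBle : B ≤ P.card := by
    rw [hPcard]
    have := Nat.lt_two_pow_self (n := B)
    omega
  obtain ⟨Q, hQP, hQcard, -, hQsum⟩ := topk v B P hvnn hBle
  -- enumerate Q
  have hlen : Q.toList.length = B := by rw [Finset.length_toList, hQcard]
  set T' : Fin B → Finset (Fin n) :=
    fun j => cls (Q.toList.get (Fin.cast hlen.symm j)) with hT'
  have hgetQ : ∀ j : Fin B, Q.toList.get (Fin.cast hlen.symm j) ∈ Q := by
    intro j
    rw [← Finset.mem_toList]
    exact List.get_mem _ _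
  have hgetP : ∀ j : Fin B, Q.toList.get (Fin.cast hlen.symm j) ∈ P :=
    fun j => hQP (hgetQ j)
  have hgetne : ∀ j : Fin B, Q.toList.get (Fin.cast hlen.symm j) ≠ ∅ := by
    intro j
    exact Finset.ne_of_mem_erase (hgetP j)
  -- disjointness
  have hdisj : ∀ j k, j ≠ k → Disjoint (T' j) (T' k) := by
    intro j k hjk
    have hne : Q.toList.get (Fin.cast hlen.symm j) ≠ Q.toList.get (Fin.cast hlen.symm k) := by
      intro h
      apply hjk
      have h2 := List.nodup_iff_injective_get.1 (Finset.nodup_toList Q) h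
      simpa [Fin.ext_iff] using h2
    rw [Finset.disjoint_left]
    intro x hx1 hx2
    rw [hT'] at hx1 hx2
    rw [mem_cls] at hx1 hx2
    exact hne (hx1 ▸ hx2)
  -- card bound
  have hcardT' : ∀ j, (T' j).card ≤ G := by
    intro j
    obtain ⟨j', hj'⟩ := Finset.nonempty_iff_ne_empty.2 (hgetne j)
    have hsub : T' j ⊆ T j' := by
      intro x hx
      rw [hT', mem_cls] at hx
      rw [← mem_pat]
      rw [hx]
      exact hj'
    exact le_trans (Finset.card_le_card hsub) (hT j')
  -- welfare of T' at least sum of Q values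
  have lower : ∀ j : Fin B, ∀ i ∈ T' j, ∏ k ∈ T' j, q k ≤ inNegProb q T' i := by
    intro j i hi
    rw [inNegProb, ← sum_all_healthy q (T' j)]
    refine indic_le_indic hq _ _ ?_
    intro ω hall
    exact ⟨j, hi, hall⟩
  have step2 : ∑ p ∈ Q, v p ≤ welfare q u T' := by
    have hsumT' : ∑ p ∈ Q, v p = ∑ j : Fin B, testWelfare q u (T' j) := by
      rw [← Finset.sum_map_toList Q v]
      rw [← Fin.sum_univ_fun_getElem Q.toList v]
      exact (Fintype.sum_equiv (finCongr hlen.symm) _ _ (fun j => rfl)).symm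
    rw [hsumT']
    have pd : (↑(univ : Finset (Fin B)) : Set (Fin B)).PairwiseDisjoint T' := by
      intro a _ b _ hab
      exact hdisj a b hab
    have hbU : ∑ j : Fin B, ∑ i ∈ T' j, u i * inNegProb q T' i
        = ∑ i ∈ univ.biUnion T', u i * inNegProb q T' i :=
      (Finset.sum_biUnion pd).symm
    have hsub : ∑ i ∈ univ.biUnion T', u i * inNegProb q T' i ≤ welfare q u T' := by
      rw [welfare]
      refine Finset.sum_le_sum_of_subset_of_nonneg (Finset.subset_univ _) ?_
      intro i _ _
      exact mul_nonneg (hu i) (inNegProb_nonneg hq T' i)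
    refine le_trans ?_ (le_trans (le_of_eq hbU) hsub)
    refine Finset.sum_le_sum fun j _ => ?_
    rw [testWelfare, mul_comm, Finset.sum_mul]
    refine Finset.sum_le_sum fun i hi => ?_
    exact mul_le_mul_of_nonneg_left (lower j i hi) (hu i)
  refine ⟨T', hdisj, hcardT', ?_⟩
  have hcast : ((P.card : ℕ) : ℝ) = (2 : ℝ) ^ B - 1 := by
    rw [hPcard]
    have h1 : (1 : ℕ) ≤ 2 ^ B := Nat.one_le_two_pow
    push_cast [Nat.cast_sub h1]
    ring
  have c1 : (B : ℝ) * welfare q u T ≤ (B : ℝ) * ∑ p ∈ P, v p :=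
    mul_le_mul_of_nonneg_left step1 (Nat.cast_nonneg B)
  have c2 : (B : ℝ) * ∑ p ∈ P, v p ≤ ((2:ℝ)^B - 1) * ∑ p ∈ Q, v p := by
    rw [← hcast]; exact hQsum
  have c3 : ((2:ℝ)^B - 1) * ∑ p ∈ Q, v p ≤ ((2:ℝ)^B - 1) * welfare q u T' := by
    refine mul_le_mul_of_nonneg_left step2 ?_
    have : (1:ℝ) ≤ 2 ^ B := one_le_pow₀ (by norm_num : (1:ℝ) ≤ 2)
    linarith
  linarith

/-- The gain of overlaps is at most 7/3 for budget 3 and at most 15/4 for budget 4;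
more generally, for any budget `B ≥ 1`, every (possibly overlapping) regime is
outperformed, up to a factor `(2^B - 1)/B`, by some non-overlapping regime. -/
theorem stmt7 :
    ∀ (n G : ℕ) (q u : Fin n → ℝ),
      (∀ i, 0 ≤ q i ∧ q i ≤ 1) → (∀ i, 0 ≤ u i) →
      ((∀ T : Fin 3 → Finset (Fin n), (∀ j, (T j).card ≤ G) →
          ∃ T' : Fin 3 → Finset (Fin n),
            (∀ j k, j ≠ k → Disjoint (T' j) (T' k)) ∧ (∀ j, (T' j).card ≤ G) ∧
              welfare q u T ≤ (7 / 3) * welfare q u T') ∧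
        (∀ T : Fin 4 → Finset (Fin n), (∀ j, (T j).card ≤ G) →
          ∃ T' : Fin 4 → Finset (Fin n),
            (∀ j k, j ≠ k → Disjoint (T' j) (T' k)) ∧ (∀ j, (T' j).card ≤ G) ∧
              welfare q u T ≤ (15 / 4) * welfare q u T') ∧
        (∀ B : ℕ, 1 ≤ B → ∀ T : Fin B → Finset (Fin n), (∀ j, (T j).card ≤ G) →
          ∃ T' : Fin B → Finset (Fin n),
            (∀ j k, j ≠ k → Disjoint (T' j) (T' k)) ∧ (∀ j, (T' j).card ≤ G) ∧
              (B : ℝ) * welfare q u T ≤ ((2 : ℝ) ^ B - 1) * welfare q u T')) := by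
  intro n G q u hq hu
  refine ⟨?_, ?_, ?_⟩
  · intro T hT
    obtain ⟨T', h1, h2, h3⟩ := general q u hq hu T hT
    refine ⟨T', h1, h2, ?_⟩
    norm_num at h3
    linarith
  · intro T hT
    obtain ⟨T', h1, h2, h3⟩ := general q u hq hu T hT
    refine ⟨T', h1, h2, ?_⟩
    norm_num at h3
    linarith
  · intro B _ T hT
    exact general q u hq hu T hT
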